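/- Suppose the rule R is subcritical. Then for every γ ∈ ℝ the set {τ ∈ 𝔗∘ : |τ|_𝔰 < γ} of strongly conforming trees of 𝔰-degree less than γ is finite. -/

import Mathlib

open MeasureTheory
open scoped Classical

noncomputable section

namespace RS

inductive Typ : Type
  | Xi : Typ
  | In : Typ
deriving DecidableEq

/-- multi-indices `ℕ^d` -/
abbrev Nd (d : ℕ) := Fin d → ℕ

/-- edge types `ℰ = 𝔏 × ℕ^d` -/
abbrev ET (d : ℕ) := Typ × Nd d

/-- Decorated rooted trees (with an extended decoration `a : ℝ` at each node),
in the symbolic representation `𝟏^a X^k Ξ_L ∏_{(m,τ) ∈ B} 𝓘_m[τ]`. -/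
inductive Tr (d : ℕ) : Type
  | node (a : ℝ) (k : Nd d) (L : List (Nd d)) (B : List (Nd d × Tr d)) : Tr d

namespace Tr

instance {d} : DecidableEq (Tr d) := Classical.decEq _

variable {d : ℕ}

/-- the tree product: join roots, add root decorations -/
def mul : Tr d → Tr d → Tr d
  | node a k L B, node a' k' L' B' => node (a + a') (k + k') (L ++ L') (B ++ B')

/-- the unit tree `𝟏` -/
def one (d : ℕ) : Tr d := node 0 0 [] []

/-- `X^k` -/
def Xpow (k : Nd d) : Tr d := node 0 k [] []

/-- `Ξ_l` -/
def Xi (l : Nd d) : Tr d := node 0 0 [l] []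

/-- `𝓘_m[τ]` -/
def plant (m : Nd d) (τ : Tr d) : Tr d := node 0 0 [] [(m, τ)]

/-- `𝟏^a` -/
def oneA (a : ℝ) : Tr d := node a 0 [] []

/-- the `𝔰`-degree of a multi-index -/
def degN (s : Fin d → ℝ) (k : Nd d) : ℝ := ∑ i, (k i : ℝ) * s i

mutual
  /-- the degree `|τ|_𝔰` (ignoring the extended decoration) -/
  def deg (s : Fin d → ℝ) (cXi cI : ℝ) : Tr d → ℝ
    | node _ k L B => degN s k + (L.map fun l => cXi - degN s l).sum + degB s cXi cI B
  def degB (s : Fin d → ℝ) (cXi cI : ℝ) : List (Nd d × Tr d) → ℝ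
    | [] => 0
    | y :: ys => (deg s cXi cI y.2 + cI - degN s y.1) + degB s cXi cI ys
end

mutual
  /-- sum of all extended decorations in a tree -/
  def oSum : Tr d → ℝ
    | node a _ _ B => a + oSumB B
  def oSumB : List (Nd d × Tr d) → ℝ
    | [] => 0
    | y :: ys => oSum y.2 + oSumB ys
end

/-- the degree `|τ|₊ = |τ|_𝔰 + Σ_x 𝔬(x)` -/
def degp (s : Fin d → ℝ) (cXi cI : ℝ) (τ : Tr d) : ℝ := deg s cXi cI τ + oSum τ

/-- trees all of whose extended decorations vanish (identified with the
trees of the reduced structure) -/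
inductive ZeroO : Tr d → Prop
  | node {k : Nd d} {L : List (Nd d)} {B : List (Nd d × Tr d)} :
      (∀ y ∈ B, ZeroO y.2) → ZeroO (node 0 k L B)

/-- the multiset `𝒩(τ)` of edge decorations at the root -/
def rootN : Tr d → Multiset (ET d)
  | node _ _ L B =>
      (↑(L.map fun l => ((Typ.Xi, l) : ET d)) : Multiset (ET d)) +
      (↑(B.map fun y => ((Typ.In, y.1) : ET d)) : Multiset (ET d))

/-- the polynomial decoration at the root -/
def rootK : Tr d → Nd d
  | node _ k _ _ => k

/-- the extended decoration at the root -/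
def rootO : Tr d → ℝ
  | node a _ _ _ => a

/-- planted trees: `𝟏^a Ξ_l` or `𝟏^a 𝓘_m[σ]` -/
def Planted : Tr d → Prop
  | node _ k L B => k = 0 ∧ L.length + B.length = 1

/-- a tree strongly conforms to a rule `R` if the multiset of outgoing edge
decorations at every node belongs to `R` -/
inductive Conforms (R : Set (Multiset (ET d))) : Tr d → Prop
  | node {a : ℝ} {k : Nd d} {L : List (Nd d)} {B : List (Nd d × Tr d)} :
      rootN (node a k L B) ∈ R → (∀ y ∈ B, Conforms R y.2) →
      Conforms R (node a k L B)

end Tr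

/-- a rule is normal if it is closed under sub-multisets -/
def Normal {d : ℕ} (R : Set (Multiset (ET d))) : Prop :=
  ∀ A B : Multiset (ET d), A ≤ B → B ∈ R → A ∈ R

/-- `reg(N) = Σ_{(𝔱,k) ∈ N} (reg(𝔱) - |k|_𝔰)` -/
def regMS {d : ℕ} (s : Fin d → ℝ) (reg : Typ → ℝ) (N : Multiset (ET d)) : ℝ :=
  (N.map fun o => reg o.1 - Tr.degN s o.2).sum

/-- subcriticality of a rule: there is `reg : 𝔏 → ℝ` with `reg(Ξ) < |Ξ|_𝔰` and
`reg(𝓘) < |𝓘|_𝔰 + inf_{N ∈ R} reg(N)` -/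
def Subcritical {d : ℕ} (s : Fin d → ℝ) (cXi cI : ℝ) (R : Set (Multiset (ET d))) : Prop :=
  ∃ reg : Typ → ℝ, reg Typ.Xi < cXi ∧
    ∃ c : ℝ, (∀ N ∈ R, c ≤ regMS s reg N) ∧ reg Typ.In < cI + c

end RS

namespace RS

namespace Tr

variable {d : ℕ}

mutual
  /-- number of edges of a tree -/
  def sz : Tr d → ℕ
    | node _ _ L B => L.length + szB B
  def szB : List (Nd d × Tr d) → ℕ
    | [] => 0
    | y :: ys => 1 + sz y.2 + szB ys
end

mutual
  /-- sum over all nodes of the degree of the node decoration -/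
  def nds (s : Fin d → ℝ) : Tr d → ℝ
    | node _ k _ B => degN s k + ndsB s B
  def ndsB (s : Fin d → ℝ) : List (Nd d × Tr d) → ℝ
    | [] => 0
    | y :: ys => nds s y.2 + ndsB s ys
end

/-- all decorations bounded by `K` componentwise -/
inductive DecLe (K : ℕ) : Tr d → Prop
  | node {a : ℝ} {k : Nd d} {L : List (Nd d)} {B : List (Nd d × Tr d)} :
      (∀ i, k i ≤ K) → (∀ l ∈ L, ∀ i, l i ≤ K) →
      (∀ y ∈ B, ∀ i, y.1 i ≤ K) → (∀ y ∈ B, DecLe K y.2) →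
      DecLe K (node a k L B)

lemma degN_nonneg {s : Fin d → ℝ} (hs : ∀ i, 1 ≤ s i) (k : Nd d) :
    0 ≤ degN s k := by
  apply Finset.sum_nonneg
  intro i _
  have := hs i
  positivity

lemma cast_le_degN {s : Fin d → ℝ} (hs : ∀ i, 1 ≤ s i) (k : Nd d) (i : Fin d) :
    (k i : ℝ) ≤ degN s k := by
  have h1 : (k i : ℝ) * 1 ≤ (k i : ℝ) * s i :=
    mul_le_mul_of_nonneg_left (hs i) (by positivity)
  have h2 : (k i : ℝ) * s i ≤ degN s k := by
    apply Finset.single_le_sum (f := fun j => (k j : ℝ) * s j)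
      (fun j _ => by have := hs j; positivity) (Finset.mem_univ i)
  linarith

lemma length_le_szB : ∀ B : List (Nd d × Tr d), B.length ≤ szB B
  | [] => le_refl _
  | y :: ys => by
      have := length_le_szB ys
      simp only [List.length_cons, szB]
      omega

lemma mem_szB {B : List (Nd d × Tr d)} {y : Nd d × Tr d} (hy : y ∈ B) :
    1 + sz y.2 ≤ szB B := by
  induction B with
  | nil => cases hy
  | cons z zs ih =>
    rcases List.mem_cons.1 hy with h | h
    · subst h; simp only [szB]; omega
    · have := ih h; simp only [szB]; omega

lemma map_sub_sum {α : Type*} (t : ℝ) (f : α → ℝ) (L : List α) :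
    (L.map fun x => t - f x).sum = L.length * t - (L.map f).sum := by
  induction L with
  | nil => simp
  | cons x xs ih => simp [ih]; ring

lemma regMS_rootN (s : Fin d → ℝ) (reg : Typ → ℝ) (a : ℝ) (k : Nd d)
    (L : List (Nd d)) (B : List (Nd d × Tr d)) :
    regMS s reg (rootN (node a k L B)) =
      (L.map fun l => reg Typ.Xi - degN s l).sum +
      (B.map fun y => reg Typ.In - degN s y.1).sum := by
  simp [regMS, rootN, List.map_map, Function.comp_def]

lemma nds_nonneg {s : Fin d → ℝ} (hs : ∀ i, 1 ≤ s i) :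
    ∀ (n : ℕ) (τ : Tr d), sz τ < n → 0 ≤ nds s τ := by
  intro n
  induction n with
  | zero => intro τ h; omega
  | succ n ih =>
    rintro ⟨a, k, L, B⟩ h
    have hB : 0 ≤ ndsB s B := by
      have hsz : szB B ≤ n := by
        simp only [sz] at h; omega
      clear h
      induction B with
      | nil => simp [ndsB]
      | cons y ys ihB =>
        simp only [szB] at hsz
        have h1 : 0 ≤ nds s y.2 := ih y.2 (by omega)
        have h2 : 0 ≤ ndsB s ys := ihB (by omega)
        simp only [ndsB]; linarith
    have := degN_nonneg hs k
    simp only [nds]; linarith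

lemma ndsB_nonneg {s : Fin d → ℝ} (hs : ∀ i, 1 ≤ s i)
    (B : List (Nd d × Tr d)) : 0 ≤ ndsB s B := by
  induction B with
  | nil => simp [ndsB]
  | cons y ys ih =>
    have := nds_nonneg hs (sz y.2 + 1) y.2 (by omega)
    simp only [ndsB]; linarith

lemma mem_le_ndsB {s : Fin d → ℝ} (hs : ∀ i, 1 ≤ s i)
    {B : List (Nd d × Tr d)} {y : Nd d × Tr d} (hy : y ∈ B) :
    nds s y.2 ≤ ndsB s B := by
  induction B with
  | nil => cases hy
  | cons z zs ih =>
    rcases List.mem_cons.1 hy with h | h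
    · subst h
      have := ndsB_nonneg hs zs
      simp only [ndsB]; linarith
    · have h1 := ih h
      have h2 := nds_nonneg hs (sz z.2 + 1) z.2 (by omega)
      simp only [ndsB]; linarith

/-- main lower bound on the degree of a conforming tree -/
lemma deg_ge {s : Fin d → ℝ} (hs : ∀ i, 1 ≤ s i) {cXi cI : ℝ}
    {R : Set (Multiset (ET d))} {reg : Typ → ℝ} {c ε : ℝ}
    (hc : ∀ N ∈ R, c ≤ regMS s reg N)
    (hεΞ : ε ≤ cXi - reg Typ.Xi) (hεI : ε ≤ cI + c - reg Typ.In) (hε : 0 ≤ ε) :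
    ∀ (n : ℕ) (τ : Tr d), sz τ < n → Conforms R τ →
      c + ε * sz τ + nds s τ ≤ deg s cXi cI τ := by
  intro n
  induction n with
  | zero => intro τ h; omega
  | succ n ih =>
    rintro ⟨a, k, L, B⟩ h hcf
    cases hcf with
    | node hN hB =>
      have hszB : szB B ≤ n := by simp only [sz] at h; omega
      -- bound on the L-sum
      have hL : (L.map fun l => reg Typ.Xi - degN s l).sum + ε * L.length ≤
          (L.map fun l => cXi - degN s l).sum := by
        rw [map_sub_sum, map_sub_sum]
        have : (L.length : ℝ) * ε ≤ L.length * (cXi - reg Typ.Xi) :=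
          mul_le_mul_of_nonneg_left hεΞ (by positivity)
        nlinarith
      -- bound on the B-sum
      have hBsum : ∀ B' : List (Nd d × Tr d), szB B' ≤ n →
          (∀ y ∈ B', Conforms R y.2) →
          (B'.map fun y => reg Typ.In - degN s y.1).sum + ε * szB B' + ndsB s B'
            ≤ degB s cXi cI B' := by
        intro B'
        induction B' with
        | nil => intro _ _; simp [ndsB, degB, szB]
        | cons y ys ihB =>
          intro hsz hcfs
          simp only [szB] at hsz
          have h1 := ih y.2 (by omega) (hcfs y List.mem_cons_self)
          have h2 := ihB (by omega) (fun z hz => hcfs z (List.mem_cons_of_mem y hz))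
          simp only [degB, ndsB, szB, List.map_cons, List.sum_cons]
          push_cast
          nlinarith
      have hB' := hBsum B hszB hB
      have hreg := hc _ hN
      rw [regMS_rootN] at hreg
      simp only [deg, nds, sz]
      push_cast
      nlinarith

/-- bound on decorations of conforming trees -/
lemma decle_of {s : Fin d → ℝ} (hs : ∀ i, 1 ≤ s i)
    {R : Set (Multiset (ET d))} {reg : Typ → ℝ} {c M : ℝ} {n K : ℕ}
    (hc : ∀ N ∈ R, c ≤ regMS s reg N)
    (hM1 : reg Typ.Xi ≤ M) (hM2 : reg Typ.In ≤ M) (hM0 : 0 ≤ M)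
    (hK : (n : ℝ) * M - c ≤ (K : ℝ)) :
    ∀ (m : ℕ) (τ : Tr d), sz τ < m → sz τ ≤ n → Conforms R τ →
      nds s τ ≤ (K : ℝ) → DecLe K τ := by
  intro m
  induction m with
  | zero => intro τ h; omega
  | succ m ih =>
    rintro ⟨a, k, L, B⟩ hm hn hcf hnds
    cases hcf with
    | node hN hB =>
      have hndsB : ndsB s B ≤ (K : ℝ) := by
        have := degN_nonneg hs k
        simp only [nds] at hnds; linarith
      have hdegk : degN s k ≤ (K : ℝ) := by
        have := ndsB_nonneg hs B
        simp only [nds] at hnds; linarith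
      -- total edge decoration bound at the root
      have hreg := hc _ hN
      rw [regMS_rootN] at hreg
      rw [map_sub_sum, map_sub_sum] at hreg
      have hedge : (L.map (degN s)).sum + (B.map fun y => degN s y.1).sum
          ≤ (K : ℝ) := by
        have hcount : (L.length : ℝ) + B.length ≤ (n : ℝ) := by
          have h1 := length_le_szB B
          have h2 : L.length + szB B ≤ n := by simpa [sz] using hn
          push_cast
          have : L.length + B.length ≤ n := by omega
          exact_mod_cast this
        have hmul : (L.length : ℝ) * reg Typ.Xi + (B.length : ℝ) * reg Typ.In ≤
            ((L.length : ℝ) + B.length) * M := by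
          have a1 : (L.length : ℝ) * reg Typ.Xi ≤ (L.length : ℝ) * M :=
            mul_le_mul_of_nonneg_left hM1 (by positivity)
          have a2 : (B.length : ℝ) * reg Typ.In ≤ (B.length : ℝ) * M :=
            mul_le_mul_of_nonneg_left hM2 (by positivity)
          linarith
        have h3 : ((L.length : ℝ) + B.length) * M ≤ (n : ℝ) * M :=
          mul_le_mul_of_nonneg_right hcount hM0
        linarith [hreg]
      have hLsum : 0 ≤ (L.map (degN s)).sum :=
        List.sum_nonneg (by
          intro x hx
          obtain ⟨l, _, rfl⟩ := List.mem_map.1 hx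
          exact degN_nonneg hs l)
      have hBsum : 0 ≤ (B.map fun y => degN s y.1).sum :=
        List.sum_nonneg (by
          intro x hx
          obtain ⟨l, _, rfl⟩ := List.mem_map.1 hx
          exact degN_nonneg hs l.1)
      refine DecLe.node ?_ ?_ ?_ ?_
      · intro i
        have := cast_le_degN hs k i
        exact_mod_cast this.trans hdegk
      · intro l hl i
        have h1 : degN s l ≤ (L.map (degN s)).sum :=
          List.single_le_sum (by
            intro x hx
            obtain ⟨l', _, rfl⟩ := List.mem_map.1 hx
            exact degN_nonneg hs l') _ (List.mem_map_of_mem (f := degN s) hl)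
        have h2 := cast_le_degN hs l i
        have : (l i : ℝ) ≤ (K : ℝ) := by linarith
        exact_mod_cast this
      · intro y hy i
        have h1 : degN s y.1 ≤ (B.map fun y => degN s y.1).sum :=
          List.single_le_sum (by
            intro x hx
            obtain ⟨l', _, rfl⟩ := List.mem_map.1 hx
            exact degN_nonneg hs l'.1) _
            (List.mem_map_of_mem (f := fun y : Nd d × Tr d => degN s y.1) hy)
        have h2 := cast_le_degN hs y.1 i
        have : (y.1 i : ℝ) ≤ (K : ℝ) := by linarith
        exact_mod_cast this
      · intro y hy
        have hsz := mem_szB hy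
        have hszτ : szB B ≤ sz (node a k L B) := by simp [sz]
        refine ih y.2 (by omega) (by omega) (hB y hy) ?_
        exact (mem_le_ndsB hs hy).trans hndsB

lemma finite_boundedLists {α : Type*} {F : Set α} (hF : F.Finite) (n : ℕ) :
    {l : List α | l.length ≤ n ∧ ∀ x ∈ l, x ∈ F}.Finite := by
  have : Finite F := hF.to_subtype
  have h1 : {l : List F | l.length ≤ n}.Finite := List.finite_length_le F n
  apply (h1.image (fun l => l.map Subtype.val)).subset
  rintro l ⟨hlen, hmem⟩
  refine ⟨l.attach.map (fun x => (⟨x.1, hmem x.1 x.2⟩ : F)), by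
    simpa using hlen, ?_⟩
  simp [List.map_map]

lemma finite_Fk (d K : ℕ) : {k : Nd d | ∀ i, k i ≤ K}.Finite := by
  exact (Set.Finite.pi (fun _ => Set.finite_Iic K)).subset (fun k hk i _ => hk i)

lemma finite_T (d n K : ℕ) :
    {τ : Tr d | ZeroO τ ∧ sz τ ≤ n ∧ DecLe K τ}.Finite := by
  induction n with
  | zero =>
    apply ((finite_Fk d K).image (fun k => node 0 k [] [])).subset
    rintro ⟨a, k, L, B⟩ ⟨hz, hsz, hdec⟩
    have hL : L = [] := by
      simp only [sz] at hsz
      exact List.length_eq_zero_iff.1 (by omega)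
    have hB : B = [] := by
      simp only [sz] at hsz
      cases B with
      | nil => rfl
      | cons y ys => simp [szB] at hsz
    have ha : a = 0 := by cases hz; rfl
    subst hL; subst hB; subst ha
    cases hdec with
    | node hk _ _ _ => exact ⟨k, hk, rfl⟩
  | succ n ih =>
    have hFL := finite_boundedLists (finite_Fk d K) (n + 1)
    have hFB := finite_boundedLists ((finite_Fk d K).prod ih) (n + 1)
    apply (((finite_Fk d K).prod (hFL.prod hFB)).image
      (fun p : Nd d × List (Nd d) × List (Nd d × Tr d) =>
        node 0 p.1 p.2.1 p.2.2)).subset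
    rintro ⟨a, k, L, B⟩ ⟨hz, hsz, hdec⟩
    have ha : a = 0 := by cases hz; rfl
    have hzB : ∀ y ∈ B, ZeroO y.2 := by cases hz; assumption
    cases hdec with
    | node hk hL hB1 hB2 =>
      subst ha
      have hsz' : L.length + szB B ≤ n + 1 := by simpa [sz] using hsz
      have h1' : L.length ≤ n + 1 := by omega
      have h2' : B.length ≤ n + 1 := by have := length_le_szB B; omega
      have h3' : ∀ y ∈ B, y.1 ∈ {k : Nd d | ∀ i, k i ≤ K} ∧
          y.2 ∈ {τ : Tr d | ZeroO τ ∧ sz τ ≤ n ∧ DecLe K τ} := by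
        intro y hy
        have hsy := mem_szB hy
        exact ⟨hB1 y hy, hzB y hy, by omega, hB2 y hy⟩
      exact ⟨(k, L, B), ⟨hk, ⟨h1', fun l hl => hL l hl⟩, h2', h3'⟩, rfl⟩

end Tr


/-- If the rule `R` is subcritical, then for every `γ ∈ ℝ` the set
of strongly conforming trees of `𝔰`-degree less than `γ` is finite. -/
theorem subcritical_finitely_many_trees
    {d : ℕ} (hd : 0 < d) (s : Fin d → ℝ) (hs : ∀ i, 1 ≤ s i)
    (cXi cI : ℝ) (hXi : cXi < 0) (hI : 0 < cI)
    (R : Set (Multiset (ET d))) (hsub : Subcritical s cXi cI R) (γ : ℝ) :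
    {τ : Tr d | Tr.ZeroO τ ∧ Tr.Conforms R τ ∧ Tr.deg s cXi cI τ < γ}.Finite := by
  obtain ⟨reg, h1, c, hc, h2⟩ := hsub
  set ε := min (cXi - reg Typ.Xi) (cI + c - reg Typ.In) with hεdef
  have hε : 0 < ε := lt_min (by linarith) (by linarith)
  set n := ⌈(γ - c) / ε⌉₊ with hn
  set M := max (max (reg Typ.Xi) (reg Typ.In)) 0 with hM
  set K := ⌈max (γ - c) ((n : ℝ) * M - c)⌉₊ with hK
  apply (Tr.finite_T d n K).subset
  rintro τ ⟨hz, hcf, hdeg⟩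
  have hge := Tr.deg_ge hs hc (min_le_left _ _) (min_le_right _ _) hε.le
      (Tr.sz τ + 1) τ (by omega) hcf
  have hnn := Tr.nds_nonneg hs (Tr.sz τ + 1) τ (by omega)
  have hszn : Tr.sz τ ≤ n := by
    have h3 : ε * Tr.sz τ ≤ γ - c := by linarith
    have h4 : (Tr.sz τ : ℝ) ≤ (γ - c) / ε := (le_div_iff₀' hε).2 h3
    have h5 : ((Tr.sz τ : ℕ) : ℝ) ≤ (n : ℝ) := h4.trans (Nat.le_ceil _)
    exact_mod_cast h5
  have hKc : γ - c ≤ (K : ℝ) := le_trans (le_max_left _ _) (Nat.le_ceil _)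
  have hKc2 : (n : ℝ) * M - c ≤ (K : ℝ) := le_trans (le_max_right _ _) (Nat.le_ceil _)
  have hnds : Tr.nds s τ ≤ (K : ℝ) := by
    have hps : 0 ≤ ε * (Tr.sz τ : ℝ) := by positivity
    linarith
  refine ⟨hz, hszn, ?_⟩
  exact Tr.decle_of hs hc (le_trans (le_max_left _ _) (le_max_left _ _))
    (le_trans (le_max_right _ _) (le_max_left _ _)) (le_max_right _ _) hKc2
    (Tr.sz τ + 1) τ (by omega) hszn hcf hnds

end RS
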